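/- Let k > 0 and ε ∈ (0, 1/3]. Suppose w : [0,1] → ℝ is twice continuously differentiable and ζ : [0,1] → ℝ is continuous, with w(0) = w(1) = 0, ζ(0) = ζ(1) = 0, and w''(z) − k² w(z) = k ζ(z) for all z ∈ [0,1], and suppose T : [0,1] → ℝ is continuously differentiable with T(1) = 0. Then ∫_{1−ε}^{1} ( z^{−2} + ε ) |w(z) T(z)| dz ≤ (6c₁/5) k^{1/2} ε^{5/2} (∫₀¹ ζ² dz)^{1/2} (∫₀¹ T'² dz)^{1/2}, where c₁ := 3^{3/4}/2^{3/2}. -/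

import Mathlib

open MeasureTheory

open Set


theorem cs_integral (f g : ℝ → ℝ) (a b : ℝ) (hab : a ≤ b) (hf : Continuous f) (hg : Continuous g) :
    (∫ x in a..b, f x * g x)^2 ≤ (∫ x in a..b, (f x)^2) * (∫ x in a..b, (g x)^2) := by
  set A := ∫ x in a..b, (f x)^2 with hA
  set B := ∫ x in a..b, (g x)^2 with hB
  set C := ∫ x in a..b, f x * g x with hC
  have key : ∀ t : ℝ, 0 ≤ A * (t * t) + (2*C) * t + B := by
    intro t
    have h1 : (0:ℝ) ≤ ∫ x in a..b, (t * f x + g x)^2 :=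
      intervalIntegral.integral_nonneg hab (fun x _ => sq_nonneg _)
    have h2 : (∫ x in a..b, (t * f x + g x)^2)
        = A * (t*t) + (2*C) * t + B := by
      have e : ∀ x, (t * f x + g x)^2
          = (t*t) * (f x)^2 + (2*t) * (f x * g x) + (g x)^2 := by intro x; ring
      simp_rw [e]
      rw [intervalIntegral.integral_add, intervalIntegral.integral_add,
        intervalIntegral.integral_const_mul, intervalIntegral.integral_const_mul]
      · ring
      · exact ((continuous_const.mul (hf.pow 2))).intervalIntegrable a b
      · exact ((continuous_const.mul (hf.mul hg))).intervalIntegrable a b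
      · exact ((continuous_const.mul (hf.pow 2)).add
          (continuous_const.mul (hf.mul hg))).intervalIntegrable a b
      · exact (hg.pow 2).intervalIntegrable a b
    linarith [h1, h2.ge, h2.le]
  have hd := discrim_le_zero key
  rw [discrim] at hd
  nlinarith [hd]

theorem abs_integral_sub_le (h : ℝ → ℝ) (hh : Continuous h) (c s : ℝ)
    (hc : c ∈ Set.Icc (0:ℝ) 1) (hs : s ∈ Set.Icc (0:ℝ) 1) :
    |∫ x in c..s, h x| ≤ ∫ x in (0:ℝ)..1, |h x| := by
  have key : ∀ c s : ℝ, c ∈ Set.Icc (0:ℝ) 1 → s ∈ Set.Icc (0:ℝ) 1 → c ≤ s →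
      |∫ x in c..s, h x| ≤ ∫ x in (0:ℝ)..1, |h x| := by
    intro c s hc hs hcs
    have h1 : |∫ x in c..s, h x| ≤ ∫ x in c..s, |h x| :=
      intervalIntegral.abs_integral_le_integral_abs hcs
    have e1 : (∫ x in (0:ℝ)..c, |h x|) + (∫ x in c..s, |h x|) = ∫ x in (0:ℝ)..s, |h x| :=
      intervalIntegral.integral_add_adjacent_intervals
        (hh.abs.intervalIntegrable _ _) (hh.abs.intervalIntegrable _ _)
    have e2 : (∫ x in (0:ℝ)..s, |h x|) + (∫ x in s..1, |h x|) = ∫ x in (0:ℝ)..1, |h x| :=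
      intervalIntegral.integral_add_adjacent_intervals
        (hh.abs.intervalIntegrable _ _) (hh.abs.intervalIntegrable _ _)
    have p1 : (0:ℝ) ≤ ∫ x in (0:ℝ)..c, |h x| :=
      intervalIntegral.integral_nonneg hc.1 (fun x _ => abs_nonneg _)
    have p2 : (0:ℝ) ≤ ∫ x in s..1, |h x| :=
      intervalIntegral.integral_nonneg hs.2 (fun x _ => abs_nonneg _)
    linarith
  rcases le_total c s with hcs | hsc
  · exact key c s hc hs hcs
  · rw [intervalIntegral.integral_symm, abs_neg]
    exact key s c hs hc hsc

theorem poly_bound_aux (u v Y : ℝ) (hu : 0 ≤ u) (hv : 0 ≤ v) (hY : 0 ≤ Y)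
    (hcon : (u + v)^2 ≤ v * Y) : 256 * (u * (Y - v - 2*u)) ≤ 27 * Y^2 := by
  nlinarith [sq_nonneg (4*(u+v) - Y), sq_nonneg (16*v - Y), sq_nonneg (16*u - 3*Y),
    mul_nonneg hu hv, sq_nonneg (u+v), sq_nonneg (u - 3*v), mul_nonneg (mul_nonneg hu hu) hu,
    mul_nonneg hu hY, mul_nonneg hv hY]

set_option maxHeartbeats 1000000 in
theorem deriv_sq_bound (k : ℝ) (hk : 0 < k) (w ζ : ℝ → ℝ)
    (hw : ContDiff ℝ 2 w) (hζ : Continuous ζ)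
    (hw0 : w 0 = 0) (hw1 : w 1 = 0)
    (hrel : ∀ z ∈ Set.Icc (0:ℝ) 1, deriv (deriv w) z = k^2 * w z + k * ζ z) :
    ∀ s ∈ Set.Icc (0:ℝ) 1,
      (deriv w s)^2 ≤ (3 * Real.sqrt 3 / 8) * k * ∫ x in (0:ℝ)..1, (ζ x)^2 := by
  -- regularity
  have h2 : ContDiff ℝ (1+1 : ℕ) w := by exact_mod_cast hw
  rw [show ((1+1:ℕ) : WithTop ℕ∞) = (1:ℕ∞) + 1 by norm_cast] at h2
  have h3 := contDiff_succ_iff_deriv.mp h2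
  have h4 : ContDiff ℝ ((0:ℕ∞)+1) (deriv w) := by exact_mod_cast h3.2.2
  have h5 := contDiff_succ_iff_deriv.mp h4
  have hdw : Differentiable ℝ w := h3.1
  have hdw' : Differentiable ℝ (deriv w) := h5.1
  have hcw : Continuous w := hdw.continuous
  have hcw' : Continuous (deriv w) := hdw'.continuous
  have hcw'' : Continuous (deriv (deriv w)) := h5.2.2.continuous
  set u := ∫ x in (0:ℝ)..1, (deriv w x)^2 with hu_def
  set b2 := ∫ x in (0:ℝ)..1, (w x)^2 with hb2_def
  set Y := ∫ x in (0:ℝ)..1, (ζ x)^2 with hY_def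
  set S := ∫ x in (0:ℝ)..1, w x * ζ x with hS_def
  set Q := ∫ x in (0:ℝ)..1, (deriv (deriv w) x)^2 with hQ_def
  have hu0 : 0 ≤ u := intervalIntegral.integral_nonneg zero_le_one (fun x _ => sq_nonneg _)
  have hb20 : 0 ≤ b2 := intervalIntegral.integral_nonneg zero_le_one (fun x _ => sq_nonneg _)
  have hY0 : 0 ≤ Y := intervalIntegral.integral_nonneg zero_le_one (fun x _ => sq_nonneg _)
  have hQ0 : 0 ≤ Q := intervalIntegral.integral_nonneg zero_le_one (fun x _ => sq_nonneg _)
  -- energy identity E1 : u + k^2*b2 = -(k*S)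
  have parts : (∫ x in (0:ℝ)..1, w x * deriv (deriv w) x)
      = w 1 * deriv w 1 - w 0 * deriv w 0 - ∫ x in (0:ℝ)..1, deriv w x * deriv w x := by
    apply intervalIntegral.integral_mul_deriv_eq_deriv_mul
      (u' := deriv w) (v' := deriv (deriv w))
    · exact fun x _ => (hdw x).hasDerivAt
    · exact fun x _ => (hdw' x).hasDerivAt
    · exact hcw'.intervalIntegrable _ _
    · exact hcw''.intervalIntegrable _ _
  have congr1 : (∫ x in (0:ℝ)..1, w x * deriv (deriv w) x)
      = ∫ x in (0:ℝ)..1, (k^2 * (w x)^2 + k * (w x * ζ x)) := by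
    apply intervalIntegral.integral_congr
    intro x hx
    rw [Set.uIcc_of_le zero_le_one] at hx
    show w x * deriv (deriv w) x = k^2 * (w x)^2 + k * (w x * ζ x)
    rw [hrel x hx]; ring
  have ia1 : IntervalIntegrable (fun x => k^2 * (w x)^2) volume 0 1 :=
    (continuous_const.mul (hcw.pow 2)).intervalIntegrable _ _
  have ia2 : IntervalIntegrable (fun x => k * (w x * ζ x)) volume 0 1 :=
    (continuous_const.mul (hcw.mul hζ)).intervalIntegrable _ _
  have lin1 : (∫ x in (0:ℝ)..1, (k^2 * (w x)^2 + k * (w x * ζ x)))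
      = k^2 * b2 + k * S := by
    rw [intervalIntegral.integral_add ia1 ia2, intervalIntegral.integral_const_mul,
      intervalIntegral.integral_const_mul]
  have usq : (∫ x in (0:ℝ)..1, deriv w x * deriv w x) = u := by
    rw [hu_def]
    apply intervalIntegral.integral_congr
    intro x _
    show deriv w x * deriv w x = (deriv w x)^2
    rw [sq]
  have E1 : u + k^2 * b2 = -(k * S) := by
    have hp := parts
    rw [congr1, lin1, hw0, hw1, usq] at hp
    linarith
  -- E2 : Q = k^4*b2 + 2*k^3*S + k^2*Y
  have congr2 : Q = ∫ x in (0:ℝ)..1,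
      (k^4 * (w x)^2 + (2*k^3) * (w x * ζ x) + k^2 * (ζ x)^2) := by
    rw [hQ_def]
    apply intervalIntegral.integral_congr
    intro x hx
    rw [Set.uIcc_of_le zero_le_one] at hx
    show (deriv (deriv w) x)^2 = k^4 * (w x)^2 + (2*k^3) * (w x * ζ x) + k^2 * (ζ x)^2
    rw [hrel x hx]; ring
  have ib1 : IntervalIntegrable (fun x => k^4 * (w x)^2) volume 0 1 :=
    (continuous_const.mul (hcw.pow 2)).intervalIntegrable _ _
  have ib2 : IntervalIntegrable (fun x => (2*k^3) * (w x * ζ x)) volume 0 1 :=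
    (continuous_const.mul (hcw.mul hζ)).intervalIntegrable _ _
  have ib3 : IntervalIntegrable (fun x => k^2 * (ζ x)^2) volume 0 1 :=
    (continuous_const.mul (hζ.pow 2)).intervalIntegrable _ _
  have E2 : Q = k^4 * b2 + 2*k^3 * S + k^2 * Y := by
    rw [congr2, intervalIntegral.integral_add (ib1.add ib2) ib3,
      intervalIntegral.integral_add ib1 ib2,
      intervalIntegral.integral_const_mul, intervalIntegral.integral_const_mul,
      intervalIntegral.integral_const_mul]
  -- C1 : S^2 ≤ b2 * Y
  have C1 : S^2 ≤ b2 * Y := cs_integral w ζ 0 1 zero_le_one hcw hζ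
  have hQE : Q = k^2 * (Y - k^2*b2 - 2*u) := by
    have e : 2*k^3 * S = 2*k^2 * (k * S) := by ring
    have e2 : k * S = -(u + k^2*b2) := by linarith
    rw [E2, e, e2]; ring
  have hcon : (u + k^2*b2)^2 ≤ (k^2*b2) * Y := by
    have e : (u + k^2*b2)^2 = k^2 * S^2 := by rw [E1]; ring
    rw [e]
    calc k^2 * S^2 ≤ k^2 * (b2 * Y) := mul_le_mul_of_nonneg_left C1 (sq_nonneg k)
      _ = (k^2*b2) * Y := by ring
  have hX : 4*(u*(Y - k^2*b2 - 2*u)) ≤ (27/64)*Y^2 := by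
    have := poly_bound_aux u (k^2*b2) Y hu0 (mul_nonneg (sq_nonneg k) hb20) hY0 hcon
    linarith
  have key4 : 4 * (u * Q) ≤ (27/64) * (k^2 * Y^2) := by
    calc 4*(u*Q) = k^2 * (4*(u*(Y - k^2*b2 - 2*u))) := by rw [hQE]; ring
      _ ≤ k^2 * ((27/64)*Y^2) := mul_le_mul_of_nonneg_left hX (sq_nonneg k)
      _ = (27/64)*(k^2*Y^2) := by ring
  -- Rolle point
  obtain ⟨c, hc, hc0⟩ := exists_deriv_eq_zero (f := w) zero_lt_one hcw.continuousOn
    (hw0.trans hw1.symm)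
  have hcI : c ∈ Set.Icc (0:ℝ) 1 := ⟨le_of_lt hc.1, le_of_lt hc.2⟩
  -- pointwise bound
  intro s hs
  have ftc : (∫ x in c..s, 2 * deriv w x * deriv (deriv w) x)
      = (deriv w s)^2 - (deriv w c)^2 := by
    apply intervalIntegral.integral_eq_sub_of_hasDerivAt
    · intro x _
      have hx := ((hdw' x).hasDerivAt.fun_pow 2)
      simpa [pow_one] using hx
    · exact ((continuous_const.mul hcw').mul hcw'').intervalIntegrable _ _
  have habs : |∫ x in c..s, 2 * deriv w x * deriv (deriv w) x|
      ≤ ∫ x in (0:ℝ)..1, |2 * deriv w x * deriv (deriv w) x| :=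
    abs_integral_sub_le _ ((continuous_const.mul hcw').mul hcw'') c s hcI hs
  have habs2 : (∫ x in (0:ℝ)..1, |2 * deriv w x * deriv (deriv w) x|)
      = 2 * ∫ x in (0:ℝ)..1, |deriv w x| * |deriv (deriv w) x| := by
    rw [← intervalIntegral.integral_const_mul]
    apply intervalIntegral.integral_congr
    intro x _
    show |2 * deriv w x * deriv (deriv w) x| = 2 * (|deriv w x| * |deriv (deriv w) x|)
    rw [abs_mul, abs_mul, abs_two]
    ring
  set M := ∫ x in (0:ℝ)..1, |deriv w x| * |deriv (deriv w) x| with hM_def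
  have hM0 : 0 ≤ M := intervalIntegral.integral_nonneg zero_le_one
    (fun x _ => mul_nonneg (abs_nonneg _) (abs_nonneg _))
  have hMcs : M^2 ≤ u * Q := by
    have hcs := cs_integral (fun x => |deriv w x|) (fun x => |deriv (deriv w) x|) 0 1
      zero_le_one hcw'.abs hcw''.abs
    simpa [sq_abs] using hcs
  have hws : (deriv w s)^2 ≤ 2 * M := by
    have e : (deriv w s)^2 = ∫ x in c..s, 2 * deriv w x * deriv (deriv w) x := by
      rw [ftc, hc0]; ring
    rw [e]
    calc (∫ x in c..s, 2 * deriv w x * deriv (deriv w) x)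
        ≤ |∫ x in c..s, 2 * deriv w x * deriv (deriv w) x| := le_abs_self _
      _ ≤ ∫ x in (0:ℝ)..1, |2 * deriv w x * deriv (deriv w) x| := habs
      _ = 2 * M := habs2
  -- conclude
  have hRnn : 0 ≤ (3 * Real.sqrt 3 / 8) * k * Y :=
    mul_nonneg (mul_nonneg (by positivity) hk.le) hY0
  have hsq3 : (Real.sqrt 3)^2 = 3 := Real.sq_sqrt (by norm_num)
  have hR2 : ((3 * Real.sqrt 3 / 8) * k * Y)^2 = (27/64) * (k^2 * Y^2) := by
    calc ((3 * Real.sqrt 3 / 8) * k * Y)^2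
        = (Real.sqrt 3)^2 * (9/64) * (k^2 * Y^2) := by ring
      _ = (27/64) * (k^2 * Y^2) := by rw [hsq3]; ring
  have hM2 : (2*M)^2 ≤ ((3 * Real.sqrt 3 / 8) * k * Y)^2 := by
    calc (2*M)^2 = 4*(M^2) := by ring
      _ ≤ 4*(u*Q) := by linarith
      _ ≤ (27/64) * (k^2 * Y^2) := key4
      _ = ((3 * Real.sqrt 3 / 8) * k * Y)^2 := hR2.symm
  have h2M : 2*M ≤ (3 * Real.sqrt 3 / 8) * k * Y := by
    have h1 := Real.sqrt_le_sqrt hM2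
    rwa [Real.sqrt_sq (by linarith), Real.sqrt_sq hRnn] at h1
  linarith

theorem mul_sqrt_rpow (x : ℝ) (hx : 0 ≤ x) : x * Real.sqrt x = x ^ ((3:ℝ)/2) := by
  rcases hx.eq_or_lt with h | h
  · rw [← h]
    simp [Real.zero_rpow (by norm_num : ((3:ℝ)/2) ≠ 0)]
  · rw [show ((3:ℝ)/2) = 1 + 1/2 by norm_num, Real.rpow_add h, Real.rpow_one,
      ← Real.sqrt_eq_rpow]


open intervalIntegral in
set_option maxHeartbeats 1000000 in
/-- Upper boundary-layer estimate in the stress-free proof: for `ε ∈ (0,1/3]`, with the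
pseudo-vorticity relation `w'' - k²w = kζ`, `w(0) = w(1) = ζ(0) = ζ(1) = 0` and `T(1) = 0`,
`∫_{1-ε}^1 (z⁻² + ε) |w T| ≤ (6c₁/5) k^{1/2} ε^{5/2} ‖ζ‖₂ ‖T'‖₂` with `c₁ = 3^{3/4}/2^{3/2}`. -/
theorem upper_boundary_layer_estimate_stress_free
    (k ε : ℝ) (hk : 0 < k) (hε : ε ∈ Set.Ioc (0:ℝ) (1/3))
    (w ζ T : ℝ → ℝ) (hw : ContDiff ℝ 2 w) (hζ : Continuous ζ) (hT : ContDiff ℝ 1 T)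
    (hw0 : w 0 = 0) (hw1 : w 1 = 0) (hζ0 : ζ 0 = 0) (hζ1 : ζ 1 = 0)
    (hrel : ∀ z ∈ Set.Icc (0:ℝ) 1, iteratedDeriv 2 w z - k^2 * w z = k * ζ z)
    (hT1 : T 1 = 0) :
    (∫ z in (1-ε)..1, (z⁻¹^2 + ε) * |w z * T z|) ≤
      (6 * (3 ^ ((3:ℝ)/4) / 2 ^ ((3:ℝ)/2)) / 5) * k ^ ((1:ℝ)/2) * ε ^ ((5:ℝ)/2) *
        (∫ z in (0:ℝ)..1, (ζ z)^2) ^ ((1:ℝ)/2) *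
        (∫ z in (0:ℝ)..1, (deriv T z)^2) ^ ((1:ℝ)/2) := by
  obtain ⟨hε0, hε3⟩ := hε
  have hεle : (1:ℝ) - ε ≤ 1 := by linarith
  have h23 : (2:ℝ)/3 ≤ 1 - ε := by linarith
  -- regularity of w
  have h2 : ContDiff ℝ (1+1 : ℕ) w := by exact_mod_cast hw
  rw [show ((1+1:ℕ) : WithTop ℕ∞) = (1:ℕ∞) + 1 by norm_cast] at h2
  have h3 := contDiff_succ_iff_deriv.mp h2
  have hdw : Differentiable ℝ w := h3.1
  have hcw : Continuous w := hdw.continuous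
  have hcw' : Continuous (deriv w) := ((contDiff_succ_iff_deriv.mp
    (by exact_mod_cast h3.2.2 : ContDiff ℝ ((0:ℕ∞)+1) (deriv w))).1).continuous
  -- regularity of T
  have hTd := contDiff_one_iff_deriv.mp hT
  have hdT : Differentiable ℝ T := hTd.1
  have hcT : Continuous T := hdT.continuous
  have hcT' : Continuous (deriv T) := hTd.2
  -- rewritten relation
  have hrel' : ∀ z ∈ Set.Icc (0:ℝ) 1, deriv (deriv w) z = k^2 * w z + k * ζ z := by
    intro z hz
    have h := hrel z hz
    rw [show iteratedDeriv 2 w = deriv (deriv w) by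
      rw [iteratedDeriv_succ, iteratedDeriv_one]] at h
    linarith
  set Y := ∫ x in (0:ℝ)..1, (ζ x)^2 with hY_def
  set YT := ∫ x in (0:ℝ)..1, (deriv T x)^2 with hYT_def
  have hY0 : 0 ≤ Y := intervalIntegral.integral_nonneg zero_le_one (fun x _ => sq_nonneg _)
  have hYT0 : 0 ≤ YT := intervalIntegral.integral_nonneg zero_le_one (fun x _ => sq_nonneg _)
  set c1 : ℝ := 3^((3:ℝ)/4)/2^((3:ℝ)/2) with hc1_def
  have hc1pos : 0 < c1 := by
    apply div_pos <;> apply Real.rpow_pos_of_pos <;> norm_num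
  have hc1sq : c1^2 = 3 * Real.sqrt 3 / 8 := by
    rw [hc1_def, div_pow]
    have h3e : ((3:ℝ)^((3:ℝ)/4))^(2:ℕ) = 3 * Real.sqrt 3 := by
      rw [← Real.rpow_natCast ((3:ℝ)^((3:ℝ)/4)) 2,
        ← Real.rpow_mul (by norm_num : (0:ℝ) ≤ 3),
        show (3:ℝ)/4 * ((2:ℕ):ℝ) = 1 + 1/2 by push_cast; norm_num,
        Real.rpow_add (by norm_num : (0:ℝ) < 3), Real.rpow_one, ← Real.sqrt_eq_rpow]
    have h2e : ((2:ℝ)^((3:ℝ)/2))^(2:ℕ) = 8 := by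
      rw [← Real.rpow_natCast ((2:ℝ)^((3:ℝ)/2)) 2,
        ← Real.rpow_mul (by norm_num : (0:ℝ) ≤ 2),
        show (3:ℝ)/2 * ((2:ℕ):ℝ) = ((3:ℕ):ℝ) by push_cast; norm_num,
        Real.rpow_natCast]
      norm_num
    rw [h3e, h2e]
  -- pointwise bound on deriv w
  have hsqb := deriv_sq_bound k hk w ζ hw hζ hw0 hw1 hrel'
  set CW := c1 * Real.sqrt k * Real.sqrt Y with hCW_def
  have hCW0 : 0 ≤ CW := by positivity
  have hCWsq : CW^2 = 3 * Real.sqrt 3 / 8 * k * Y := by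
    rw [hCW_def, mul_pow, mul_pow, Real.sq_sqrt hk.le, Real.sq_sqrt hY0, hc1sq]
  have hwp : ∀ s ∈ Set.Icc (0:ℝ) 1, |deriv w s| ≤ CW := by
    intro s hs
    have hsq : (deriv w s)^2 ≤ CW^2 := by rw [hCWsq]; exact hsqb s hs
    have h := Real.sqrt_le_sqrt hsq
    rwa [Real.sqrt_sq_eq_abs, Real.sqrt_sq hCW0] at h
  -- bound on w near the upper boundary
  have hwb : ∀ z ∈ Set.Icc (1-ε) 1, |w z| ≤ CW * (1 - z) := by
    intro z hz
    have hz0 : (0:ℝ) ≤ z := le_trans (by linarith) hz.1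
    have e : (∫ x in z..1, deriv w x) = w 1 - w z :=
      intervalIntegral.integral_deriv_eq_sub (fun x _ => hdw x)
        (hcw'.intervalIntegrable _ _)
    have e2 : w z = -(∫ x in z..1, deriv w x) := by rw [e, hw1]; ring
    rw [e2, abs_neg]
    have hb : ‖∫ x in z..1, deriv w x‖ ≤ CW * |1 - z| := by
      apply intervalIntegral.norm_integral_le_of_norm_le_const
      intro x hx
      rw [Set.uIoc_of_le hz.2] at hx
      exact hwp x ⟨le_trans hz0 (le_of_lt hx.1), hx.2⟩
    calc |∫ x in z..1, deriv w x| ≤ CW * |1 - z| := hb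
      _ = CW * (1 - z) := by rw [abs_of_nonneg (by linarith [hz.2])]
  -- bound on T near the upper boundary
  have hTb : ∀ z ∈ Set.Icc (1-ε) 1, |T z| ≤ Real.sqrt (1-z) * Real.sqrt YT := by
    intro z hz
    have hz0 : (0:ℝ) ≤ z := le_trans (by linarith) hz.1
    have hz1 : z ≤ 1 := hz.2
    have h1z : (0:ℝ) ≤ 1 - z := by linarith
    have e : (∫ x in z..1, deriv T x) = T 1 - T z :=
      intervalIntegral.integral_deriv_eq_sub (fun x _ => hdT x)
        (hcT'.intervalIntegrable _ _)
    have h1 : |T z| ≤ ∫ x in z..1, |deriv T x| := by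
      have e2 : T z = -(∫ x in z..1, deriv T x) := by rw [e, hT1]; ring
      rw [e2, abs_neg]
      exact intervalIntegral.abs_integral_le_integral_abs hz1
    have h2 : (∫ x in z..1, |deriv T x|)^2 ≤ (∫ x in z..1, (deriv T x)^2) * (1 - z) := by
      have hcs := cs_integral (fun x => |deriv T x|) (fun _ => (1:ℝ)) z 1 hz1
        hcT'.abs continuous_const
      simpa [sq_abs] using hcs
    have h3 : (∫ x in z..1, (deriv T x)^2) ≤ YT := by
      have e1 : (∫ x in (0:ℝ)..z, (deriv T x)^2) + (∫ x in z..1, (deriv T x)^2) = YT :=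
        intervalIntegral.integral_add_adjacent_intervals
          ((hcT'.pow 2).intervalIntegrable _ _) ((hcT'.pow 2).intervalIntegrable _ _)
      have p1 : (0:ℝ) ≤ ∫ x in (0:ℝ)..z, (deriv T x)^2 :=
        intervalIntegral.integral_nonneg hz0 (fun x _ => sq_nonneg _)
      linarith
    have h4 : |T z|^2 ≤ (1-z) * YT := by
      have habs0 : (0:ℝ) ≤ ∫ x in z..1, |deriv T x| :=
        intervalIntegral.integral_nonneg hz1 (fun x _ => abs_nonneg _)
      have hm := mul_le_mul_of_nonneg_right h3 h1z
      nlinarith [abs_nonneg (T z)]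
    calc |T z| = Real.sqrt (|T z|^2) := (Real.sqrt_sq (abs_nonneg _)).symm
      _ ≤ Real.sqrt ((1-z) * YT) := Real.sqrt_le_sqrt h4
      _ = Real.sqrt (1-z) * Real.sqrt YT := Real.sqrt_mul h1z _
  -- pointwise comparison on the boundary layer
  have hpt : ∀ z ∈ Set.Icc (1-ε) 1, (z⁻¹^2 + ε) * |w z * T z|
      ≤ 3 * (CW * Real.sqrt YT) * ((1-z) * Real.sqrt (1-z)) := by
    intro z hz
    have hz23 : (2:ℝ)/3 ≤ z := le_trans h23 hz.1
    have hzpos : (0:ℝ) < z := lt_of_lt_of_le (by norm_num) hz23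
    have h1z : (0:ℝ) ≤ 1 - z := by linarith [hz.2]
    have hinv : z⁻¹ ≤ 3/2 := by
      have := inv_anti₀ (by norm_num : (0:ℝ) < 2/3) hz23
      simpa using this.trans_eq (by norm_num)
    have hinv0 : (0:ℝ) ≤ z⁻¹ := inv_nonneg.mpr hzpos.le
    have hco : z⁻¹^2 + ε ≤ 3 := by nlinarith
    have habs : |w z * T z| ≤ (CW * (1-z)) * (Real.sqrt (1-z) * Real.sqrt YT) := by
      rw [abs_mul]
      exact mul_le_mul (hwb z hz) (hTb z hz) (abs_nonneg _)
        (mul_nonneg hCW0 h1z)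
    calc (z⁻¹^2 + ε) * |w z * T z|
        ≤ 3 * ((CW * (1-z)) * (Real.sqrt (1-z) * Real.sqrt YT)) :=
          mul_le_mul hco habs (abs_nonneg _) (by norm_num)
      _ = 3 * (CW * Real.sqrt YT) * ((1-z) * Real.sqrt (1-z)) := by ring
  -- integrability
  have hfint : IntervalIntegrable (fun z => (z⁻¹^2 + ε) * |w z * T z|) volume (1-ε) 1 := by
    apply ContinuousOn.intervalIntegrable
    rw [Set.uIcc_of_le hεle]
    apply ContinuousOn.mul
    · apply ContinuousOn.add _ continuousOn_const
      apply ContinuousOn.pow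
      apply ContinuousOn.inv₀ continuousOn_id
      intro x hx
      have : (2:ℝ)/3 ≤ x := le_trans h23 hx.1
      intro h0
      rw [id] at h0
      linarith
    · exact ((hcw.mul hcT).abs).continuousOn
  have hgc : Continuous (fun z : ℝ => 3 * (CW * Real.sqrt YT) * ((1-z) * Real.sqrt (1-z))) :=
    continuous_const.mul ((continuous_const.sub continuous_id').mul
      (Real.continuous_sqrt.comp (continuous_const.sub continuous_id')))
  have hgint : IntervalIntegrable
      (fun z : ℝ => 3 * (CW * Real.sqrt YT) * ((1-z) * Real.sqrt (1-z))) volume (1-ε) 1 :=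
    hgc.intervalIntegrable _ _
  have hmono := intervalIntegral.integral_mono_on hεle hfint hgint hpt
  -- value of the comparison integral
  have hval : (∫ z in (1-ε)..1, (1-z) * Real.sqrt (1-z)) = (2/5) * ε^((5:ℝ)/2) := by
    have congrg : (∫ z in (1-ε)..1, (1-z) * Real.sqrt (1-z))
        = ∫ z in (1-ε)..1, (1-z)^((3:ℝ)/2) := by
      apply intervalIntegral.integral_congr
      intro x hx
      rw [Set.uIcc_of_le hεle] at hx
      exact mul_sqrt_rpow (1-x) (by linarith [hx.2])
    have hcomp : (∫ z in (1-ε)..1, (1-z)^((3:ℝ)/2)) = ∫ x in (0:ℝ)..ε, x^((3:ℝ)/2) := by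
      have h := intervalIntegral.integral_comp_sub_left
        (a := 1-ε) (b := 1) (fun x => x^((3:ℝ)/2)) 1
      simpa using h
    rw [congrg, hcomp, integral_rpow (Or.inl (by norm_num : (-1:ℝ) < 3/2)),
      Real.zero_rpow (by norm_num : ((3:ℝ)/2 + 1) ≠ 0),
      show (3:ℝ)/2 + 1 = 5/2 by norm_num]
    ring
  calc (∫ z in (1-ε)..1, (z⁻¹^2 + ε) * |w z * T z|)
      ≤ ∫ z in (1-ε)..1, 3 * (CW * Real.sqrt YT) * ((1-z) * Real.sqrt (1-z)) := hmono
    _ = 3 * (CW * Real.sqrt YT) * ((2/5) * ε^((5:ℝ)/2)) := by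
        rw [intervalIntegral.integral_const_mul, hval]
    _ = (6 * c1 / 5) * k ^ ((1:ℝ)/2) * ε ^ ((5:ℝ)/2) * Y ^ ((1:ℝ)/2) * YT ^ ((1:ℝ)/2) := by
        rw [hCW_def, Real.sqrt_eq_rpow k, Real.sqrt_eq_rpow Y, Real.sqrt_eq_rpow YT]
        ring
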